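/- The inclusion-exclusion polynomial Q_ρ is reciprocal: Q_ρ(z) = z^{φ(ρ)} · Q_ρ(1/z), where φ(ρ) = ∏ᵢ (rᵢ − 1) is the degree of Q_ρ. Consequently, its coefficients a_m satisfy a_m = a_{φ(ρ) − m} for all 0 ≤ m ≤ φ(ρ). -/

import Mathlib

open Polynomial

/-- Reflecting a product of `X^(m S) - 1` flips each factor's sign. -/
lemma reflect_prod_aux {ι : Type*} [DecidableEq ι] (T : Finset ι) (m : ι → ℕ) :
    (∏ S ∈ T, ((X : Polynomial ℤ) ^ (m S) - 1)).reflect (∑ S ∈ T, m S) =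
      (-1) ^ T.card * ∏ S ∈ T, ((X : Polynomial ℤ) ^ (m S) - 1) := by
  classical
  induction T using Finset.induction_on with
  | empty => simp [reflect_one]
  | insert _ _ ha ih =>
    rename_i a T
    have hdeg : ∀ n : ℕ, ((X : Polynomial ℤ) ^ n - 1).natDegree ≤ n := by
      intro n
      refine le_trans (natDegree_sub_le _ _) ?_
      simp
    have hprod : (∏ S ∈ T, ((X : Polynomial ℤ) ^ (m S) - 1)).natDegree ≤ ∑ S ∈ T, m S :=
      le_trans (natDegree_prod_le _ _) (Finset.sum_le_sum fun i _ => hdeg (m i))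
    rw [Finset.prod_insert ha, Finset.sum_insert ha,
      reflect_mul _ _ (hdeg (m a)) hprod, ih, Finset.card_insert_of_notMem ha]
    have h1 : ((X : Polynomial ℤ) ^ (m a) - 1).reflect (m a)
        = -(((X : Polynomial ℤ) ^ (m a) - 1)) := by
      rw [reflect_sub, reflect_monomial, reflect_one, revAt_le le_rfl, Nat.sub_self]
      ring
    rw [h1]
    ring

/-- The inclusion-exclusion polynomial `Q_ρ` is reciprocal:
`Q_ρ(z) = z^{φ(ρ)} Q_ρ(1/z)` where `φ(ρ) = ∏ᵢ (rᵢ - 1)` is the degree;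
consequently its coefficients satisfy `a_m = a_{φ(ρ) - m}` for `0 ≤ m ≤ φ(ρ)`. -/
theorem stmt_2 (s : ℕ) (hs : 1 ≤ s) (r : Fin s → ℕ) (hr : ∀ i, 1 < r i)
    (hcop : ∀ i j, i ≠ j → Nat.Coprime (r i) (r j))
    (n₀ : ℕ) (hn₀ : n₀ = ∏ i, r i)
    (Q : Polynomial ℤ)
    (hQ : Q * (∏ S ∈ Finset.univ.filter (fun S : Finset (Fin s) => Odd S.card),
        ((X : Polynomial ℤ) ^ (n₀ / ∏ i ∈ S, r i) - 1)) =
      (∏ S ∈ Finset.univ.filter (fun S : Finset (Fin s) => Even S.card),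
        ((X : Polynomial ℤ) ^ (n₀ / ∏ i ∈ S, r i) - 1))) :
    Q.reflect (∏ i, (r i - 1)) = Q ∧
    ∀ m : ℕ, m ≤ ∏ i, (r i - 1) → Q.coeff m = Q.coeff ((∏ i, (r i - 1)) - m) := by
  classical
  set φ : ℕ := ∏ i, (r i - 1) with hφ
  set nS : Finset (Fin s) → ℕ := fun S => n₀ / ∏ i ∈ S, r i with hnS
  set O : Finset (Finset (Fin s)) :=
    Finset.univ.filter (fun S : Finset (Fin s) => Odd S.card) with hO
  set E : Finset (Finset (Fin s)) :=
    Finset.univ.filter (fun S : Finset (Fin s) => Even S.card) with hE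
  set A : Polynomial ℤ := ∏ S ∈ O, ((X : Polynomial ℤ) ^ (nS S) - 1) with hA
  set B : Polynomial ℤ := ∏ S ∈ E, ((X : Polynomial ℤ) ^ (nS S) - 1) with hB
  -- nS S equals the product over the complement
  have hnS_compl : ∀ S : Finset (Fin s), nS S = ∏ i ∈ Sᶜ, r i := by
    intro S
    have hpos : 0 < ∏ i ∈ S, r i :=
      Finset.prod_pos fun i _ => lt_trans one_pos (hr i)
    show n₀ / ∏ i ∈ S, r i = ∏ i ∈ Sᶜ, r i
    rw [hn₀, ← Finset.prod_mul_prod_compl S r, Nat.mul_div_cancel_left _ hpos]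
  have hnS_pos : ∀ S : Finset (Fin s), 1 ≤ nS S := by
    intro S
    rw [hnS_compl]
    exact Finset.one_le_prod' fun i _ => (hr i).le
  -- the key degree identity over ℤ, then over ℕ
  have hkey : (∑ S ∈ E, (nS S : ℤ)) - ∑ S ∈ O, (nS S : ℤ) = (φ : ℤ) := by
    have hcast : (φ : ℤ) = ∏ i, ((r i : ℤ) - 1) := by
      rw [hφ, Nat.cast_prod]
      exact Finset.prod_congr rfl fun i _ => by
        rw [Nat.cast_sub (hr i).le, Nat.cast_one]
    have hpa : ∏ i : Fin s, ((r i : ℤ) - 1) =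
        ∑ T : Finset (Fin s), (∏ i ∈ T, (r i : ℤ)) * (-1) ^ (Finset.univ \ T).card := by
      have := Finset.prod_add (fun i : Fin s => (r i : ℤ)) (fun _ => (-1 : ℤ)) Finset.univ
      simp only [Finset.powerset_univ, Finset.prod_const] at this
      calc ∏ i : Fin s, ((r i : ℤ) - 1)
          = ∏ i : Fin s, ((r i : ℤ) + (-1)) :=
            Finset.prod_congr rfl fun i _ => by ring
        _ = _ := by rw [this]
    -- reindex by complement
    have hre : ∑ T : Finset (Fin s), (∏ i ∈ T, (r i : ℤ)) * (-1) ^ (Finset.univ \ T).card =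
        ∑ T : Finset (Fin s), (-1 : ℤ) ^ T.card * (nS T : ℤ) := by
      rw [← Equiv.sum_comp (Function.Involutive.toPerm _
        (compl_involutive : Function.Involutive (compl : Finset (Fin s) → Finset (Fin s))))
        (fun T => (-1 : ℤ) ^ T.card * (nS T : ℤ))]
      refine Finset.sum_congr rfl fun T _ => ?_
      show (∏ i ∈ T, (r i : ℤ)) * (-1) ^ (Finset.univ \ T).card
          = (-1 : ℤ) ^ Tᶜ.card * (nS Tᶜ : ℤ)
      rw [hnS_compl, compl_compl, ← Finset.compl_eq_univ_sdiff, mul_comm]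
      congr 1
      push_cast
      rfl
    have hsplit : ∑ T : Finset (Fin s), (-1 : ℤ) ^ T.card * (nS T : ℤ) =
        (∑ S ∈ E, (nS S : ℤ)) - ∑ S ∈ O, (nS S : ℤ) := by
      rw [← Finset.sum_filter_add_sum_filter_not Finset.univ
        (fun T : Finset (Fin s) => Even T.card)]
      have h1 : ∑ T ∈ Finset.univ.filter (fun T : Finset (Fin s) => Even T.card),
          (-1 : ℤ) ^ T.card * (nS T : ℤ) = ∑ S ∈ E, (nS S : ℤ) := by
        refine Finset.sum_congr rfl fun T hT => ?_
        have : Even T.card := (Finset.mem_filter.mp hT).2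
        rw [this.neg_one_pow, one_mul]
      have hfilt : Finset.univ.filter (fun T : Finset (Fin s) => ¬ Even T.card) = O := by
        rw [hO]; ext T; simp [Nat.not_even_iff_odd]
      have h2 : ∑ T ∈ Finset.univ.filter (fun T : Finset (Fin s) => ¬ Even T.card),
          (-1 : ℤ) ^ T.card * (nS T : ℤ) = -∑ S ∈ O, (nS S : ℤ) := by
        rw [hfilt, ← Finset.sum_neg_distrib]
        refine Finset.sum_congr rfl fun T hT => ?_
        have hodd : Odd T.card := by
          have := (Finset.mem_filter.mp (hfilt ▸ hT)).2
          exact Nat.not_even_iff_odd.mp this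
        rw [hodd.neg_one_pow]
        ring
      rw [h1, h2]
      ring
    rw [hcast, hpa, hre, hsplit]
  have hdE : (∑ S ∈ E, nS S) = φ + ∑ S ∈ O, nS S := by
    have := hkey
    have h2 : ((∑ S ∈ E, nS S : ℕ) : ℤ) = ((φ + ∑ S ∈ O, nS S : ℕ) : ℤ) := by
      push_cast
      linarith [hkey]
    exact_mod_cast h2
  -- parity of card E and card O agree
  have hcardsum : E.card + O.card = 2 ^ s := by
    have hfilt : Finset.univ.filter (fun T : Finset (Fin s) => ¬ Even T.card) = O := by
      rw [hO]; ext T; simp [Nat.not_even_iff_odd]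
    rw [hE, ← hfilt, Finset.card_filter_add_card_filter_not]
    simp [Finset.card_univ, Fintype.card_finset]
  have hpar : Even E.card ↔ Even O.card := by
    have h2 : Even (E.card + O.card) := by
      rw [hcardsum]
      exact (Nat.even_pow).mpr ⟨even_two, Nat.one_le_iff_ne_zero.mp hs⟩
    exact Nat.even_add.mp h2
  have hsign : ((-1 : Polynomial ℤ)) ^ E.card = (-1 : Polynomial ℤ) ^ O.card := by
    by_cases h : Even E.card
    · rw [h.neg_one_pow, (hpar.mp h).neg_one_pow]
    · rw [(Nat.not_even_iff_odd.mp h).neg_one_pow,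
        (Nat.not_even_iff_odd.mp (fun ho => h (hpar.mpr ho))).neg_one_pow]
  -- degrees
  have hdegfac : ∀ S : Finset (Fin s), ((X : Polynomial ℤ) ^ (nS S) - 1).natDegree = nS S := by
    intro S
    have : ((X : Polynomial ℤ) ^ (nS S) - 1) = X ^ (nS S) - C 1 := by rw [map_one]
    rw [this, natDegree_X_pow_sub_C]
  have hfacne : ∀ S : Finset (Fin s), ((X : Polynomial ℤ) ^ (nS S) - 1) ≠ 0 := by
    intro S h
    have := hdegfac S
    rw [h, natDegree_zero] at this
    exact absurd this.symm (Nat.one_le_iff_ne_zero.mp (hnS_pos S))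
  have hAne : A ≠ 0 := Finset.prod_ne_zero_iff.mpr fun S _ => hfacne S
  have hBne : B ≠ 0 := Finset.prod_ne_zero_iff.mpr fun S _ => hfacne S
  have hQne : Q ≠ 0 := by
    intro h
    rw [h, zero_mul] at hQ
    exact hBne hQ.symm
  have hdegA : A.natDegree = ∑ S ∈ O, nS S := by
    rw [hA, natDegree_prod _ _ fun S _ => hfacne S]
    exact Finset.sum_congr rfl fun S _ => hdegfac S
  have hdegB : B.natDegree = ∑ S ∈ E, nS S := by
    rw [hB, natDegree_prod _ _ fun S _ => hfacne S]
    exact Finset.sum_congr rfl fun S _ => hdegfac S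
  have hdegQ : Q.natDegree = φ := by
    have := natDegree_mul hQne hAne
    rw [hQ, hdegA, hdegB, hdE] at this
    omega
  -- the reflection identity
  have hreflA : A.reflect (∑ S ∈ O, nS S) = (-1) ^ O.card * A := reflect_prod_aux O nS
  have hreflB : B.reflect (∑ S ∈ E, nS S) = (-1) ^ E.card * B := reflect_prod_aux E nS
  have hmain : Q.reflect φ * A * (-1) ^ O.card = Q * A * (-1) ^ O.card := by
    have h1 : (Q * A).reflect (φ + ∑ S ∈ O, nS S) =
        Q.reflect φ * A.reflect (∑ S ∈ O, nS S) :=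
      reflect_mul Q A hdegQ.le hdegA.le
    rw [hQ, ← hdE, hreflB, hreflA, hsign] at h1
    rw [← hQ] at h1
    calc Q.reflect φ * A * (-1) ^ O.card = (-1) ^ O.card * (Q * A) := by
          rw [h1]; ring
      _ = Q * A * (-1) ^ O.card := by ring
  have hrefl : Q.reflect φ = Q := by
    have hne : (A * (-1 : Polynomial ℤ) ^ O.card) ≠ 0 :=
      mul_ne_zero hAne (pow_ne_zero _ (neg_ne_zero.mpr one_ne_zero))
    have := mul_right_cancel₀ hne (by
      calc Q.reflect φ * (A * (-1) ^ O.card) = Q.reflect φ * A * (-1) ^ O.card := by ring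
        _ = Q * A * (-1) ^ O.card := hmain
        _ = Q * (A * (-1) ^ O.card) := by ring)
    exact this
  refine ⟨hrefl, fun m hm => ?_⟩
  conv_lhs => rw [← hrefl]
  rw [coeff_reflect, revAt_le hm]
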